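/- In the group G = ⟨P, Q, R, B | [P,Q]=[Q,R]=[R,P]=B, B central⟩, the subgroup generated by Q, R, B is isomorphic to the discrete Heisenberg group, i.e. it has presentation ⟨Q, R, B | [Q,R]=B, [Q,B]=[R,B]=1⟩. -/

import Mathlib

open FreeGroup
open scoped commutatorElement

/-- The relators of the group `G = ⟨P,Q,R,B | [P,Q]=[Q,R]=[R,P]=B, B central⟩`,
with generators indexed by `Fin 4` as `P = 0`, `Q = 1`, `R = 2`, `B = 3`. -/
def H3rels : Set (FreeGroup (Fin 4)) :=
  { ⁅of (0 : Fin 4), of (1 : Fin 4)⁆ * (of (3 : Fin 4))⁻¹, ⁅of (1 : Fin 4), of (2 : Fin 4)⁆ * (of (3 : Fin 4))⁻¹, ⁅of (2 : Fin 4), of (0 : Fin 4)⁆ * (of (3 : Fin 4))⁻¹,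
    ⁅of (0 : Fin 4), of (3 : Fin 4)⁆, ⁅of (1 : Fin 4), of (3 : Fin 4)⁆, ⁅of (2 : Fin 4), of (3 : Fin 4)⁆ }

/-- The group `G = H(3)` of link-homotopy classes of three-component string links. -/
abbrev H3 : Type := PresentedGroup H3rels

def H3.P : H3 := PresentedGroup.of (0 : Fin 4)
def H3.Q : H3 := PresentedGroup.of (1 : Fin 4)
def H3.R : H3 := PresentedGroup.of (2 : Fin 4)
def H3.B : H3 := PresentedGroup.of (3 : Fin 4)

/-- The relators of the discrete Heisenberg group `⟨Q,R,B | [Q,R]=B, B central⟩`,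
with generators indexed by `Fin 3` as `Q = 0`, `R = 1`, `B = 2`. -/
def HeisRels : Set (FreeGroup (Fin 3)) :=
  { ⁅of (0 : Fin 3), of (1 : Fin 3)⁆ * (of (2 : Fin 3))⁻¹,
    ⁅of (0 : Fin 3), of (2 : Fin 3)⁆, ⁅of (1 : Fin 3), of (2 : Fin 3)⁆ }

/-- The discrete Heisenberg group, presented as `⟨Q,R,B | [Q,R]=B, [Q,B]=[R,B]=1⟩`. -/
abbrev Heis : Type := PresentedGroup HeisRels

section AuxGroup
variable {G : Type*} [Group G] {q r b : G}

lemma aux_qr (h : ⁅q,r⁆ = b) : q * r = b * (r * q) := by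
  rw [← h]; group

lemma aux_key (h : ⁅q,r⁆ = b) (h1 : Commute b q) (h2 : Commute b r) :
    q⁻¹ * (r⁻¹ * (q * r)) = b := by
  rw [aux_qr h, ← mul_assoc r⁻¹ b, ← h2.inv_right.eq, mul_assoc b, inv_mul_cancel_left,
    h1.eq, inv_mul_cancel_left]

lemma aux1 (h : ⁅q,r⁆ = b) (h1 : Commute b q) (h2 : Commute b r) :
    ⁅q⁻¹ * r⁻¹, q⁆ = b := by
  calc ⁅q⁻¹ * r⁻¹, q⁆ = q⁻¹ * (r⁻¹ * (q * r)) := by group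
  _ = b := aux_key h h1 h2

lemma aux2 (h : ⁅q,r⁆ = b) (h1 : Commute b q) (h2 : Commute b r) :
    ⁅r, q⁻¹ * r⁻¹⁆ = b := by
  calc ⁅r, q⁻¹ * r⁻¹⁆ = r * (q⁻¹ * (r⁻¹ * (q * r))) * r⁻¹ := by group
  _ = r * b * r⁻¹ := by rw [aux_key h h1 h2]
  _ = b := by rw [← h2.eq]; group

lemma aux3 (h1 : Commute b q) (h2 : Commute b r) : ⁅q⁻¹ * r⁻¹, b⁆ = 1 :=
  (Commute.mul_left h1.inv_right.symm h2.inv_right.symm).commutator_eq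

end AuxGroup

lemma PG_rel {α : Type*} {rels : Set (FreeGroup α)} {r : FreeGroup α} (h : r ∈ rels) :
    PresentedGroup.mk rels r = 1 :=
  (QuotientGroup.eq_one_iff r).mpr (Subgroup.subset_normalClosure h)

-- relations in H3
lemma H3.commQR : ⁅H3.Q, H3.R⁆ = H3.B := by
  have h := PG_rel (rels := H3rels) (r := ⁅of (1 : Fin 4), of (2 : Fin 4)⁆ * (of (3 : Fin 4))⁻¹)
    (by unfold H3rels; simp)
  have e : (PresentedGroup.mk H3rels (⁅of (1:Fin 4), of (2:Fin 4)⁆ * (of (3:Fin 4))⁻¹)) =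
      ⁅H3.Q, H3.R⁆ * H3.B⁻¹ := by
    simp [H3.Q, H3.R, H3.B, PresentedGroup.of, commutatorElement_def]
  rw [e] at h
  exact mul_inv_eq_one.mp h

lemma H3.commQB : ⁅H3.Q, H3.B⁆ = 1 := by
  have h := PG_rel (rels := H3rels) (r := ⁅of (1 : Fin 4), of (3 : Fin 4)⁆)
    (by unfold H3rels; simp)
  have e : (PresentedGroup.mk H3rels ⁅of (1:Fin 4), of (3:Fin 4)⁆) = ⁅H3.Q, H3.B⁆ := by
    simp [H3.Q, H3.B, PresentedGroup.of, commutatorElement_def]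
  rw [e] at h; exact h

lemma H3.commRB : ⁅H3.R, H3.B⁆ = 1 := by
  have h := PG_rel (rels := H3rels) (r := ⁅of (2 : Fin 4), of (3 : Fin 4)⁆)
    (by unfold H3rels; simp)
  have e : (PresentedGroup.mk H3rels ⁅of (2:Fin 4), of (3:Fin 4)⁆) = ⁅H3.R, H3.B⁆ := by
    simp [H3.R, H3.B, PresentedGroup.of, commutatorElement_def]
  rw [e] at h; exact h

-- generators of Heis
def Heis.q : Heis := PresentedGroup.of (0 : Fin 3)
def Heis.r : Heis := PresentedGroup.of (1 : Fin 3)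
def Heis.b : Heis := PresentedGroup.of (2 : Fin 3)

lemma Heis.commQR : ⁅Heis.q, Heis.r⁆ = Heis.b := by
  have h := PG_rel (rels := HeisRels) (r := ⁅of (0 : Fin 3), of (1 : Fin 3)⁆ * (of (2 : Fin 3))⁻¹)
    (by unfold HeisRels; simp)
  have e : (PresentedGroup.mk HeisRels (⁅of (0:Fin 3), of (1:Fin 3)⁆ * (of (2:Fin 3))⁻¹)) =
      ⁅Heis.q, Heis.r⁆ * Heis.b⁻¹ := by
    simp [Heis.q, Heis.r, Heis.b, PresentedGroup.of, commutatorElement_def]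
  rw [e] at h
  exact mul_inv_eq_one.mp h

lemma Heis.commQB : Commute Heis.b Heis.q := by
  have h := PG_rel (rels := HeisRels) (r := ⁅of (0 : Fin 3), of (2 : Fin 3)⁆)
    (by unfold HeisRels; simp)
  have e : (PresentedGroup.mk HeisRels ⁅of (0:Fin 3), of (2:Fin 3)⁆) = ⁅Heis.q, Heis.b⁆ := by
    simp [Heis.q, Heis.b, PresentedGroup.of, commutatorElement_def]
  rw [e] at h
  exact (commutatorElement_eq_one_iff_commute.mp h).symm

lemma Heis.commRB : Commute Heis.b Heis.r := by
  have h := PG_rel (rels := HeisRels) (r := ⁅of (1 : Fin 3), of (2 : Fin 3)⁆)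
    (by unfold HeisRels; simp)
  have e : (PresentedGroup.mk HeisRels ⁅of (1:Fin 3), of (2:Fin 3)⁆) = ⁅Heis.r, Heis.b⁆ := by
    simp [Heis.r, Heis.b, PresentedGroup.of, commutatorElement_def]
  rw [e] at h
  exact (commutatorElement_eq_one_iff_commute.mp h).symm

-- the maps
def fψ : Fin 3 → H3 := ![H3.Q, H3.R, H3.B]
def fφ : Fin 4 → Heis := ![Heis.q⁻¹ * Heis.r⁻¹, Heis.q, Heis.r, Heis.b]

lemma hψ : ∀ w ∈ HeisRels, FreeGroup.lift fψ w = 1 := by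
  intro w hw
  rcases hw with rfl | rfl | rfl <;>
    simp only [_root_.map_mul, _root_.map_inv, map_commutatorElement, FreeGroup.lift_apply_of, fψ,
      Matrix.cons_val_zero, Matrix.cons_val_one, Matrix.head_cons, Matrix.cons_val_two,
      Matrix.tail_cons]
  · rw [H3.commQR]; group
  · exact H3.commQB
  · exact H3.commRB

lemma hφ : ∀ w ∈ H3rels, FreeGroup.lift fφ w = 1 := by
  intro w hw
  rcases hw with rfl | rfl | rfl | rfl | rfl | rfl <;>
    simp only [_root_.map_mul, _root_.map_inv, map_commutatorElement, FreeGroup.lift_apply_of, fφ,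
      Matrix.cons_val_zero, Matrix.cons_val_one, Matrix.head_cons, Matrix.cons_val_two,
      Matrix.tail_cons, Matrix.cons_val_three]
  · rw [aux1 Heis.commQR Heis.commQB Heis.commRB]; group
  · rw [Heis.commQR]; group
  · rw [aux2 Heis.commQR Heis.commQB Heis.commRB]; group
  · exact aux3 Heis.commQB Heis.commRB
  · exact Heis.commQB.symm.commutator_eq
  · exact Heis.commRB.symm.commutator_eq

noncomputable def ψ : Heis →* H3 := PresentedGroup.toGroup hψ
noncomputable def φ : H3 →* Heis := PresentedGroup.toGroup hφ

lemma left_inv : ∀ x : Heis, φ (ψ x) = x := by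
  have : φ.comp ψ = MonoidHom.id Heis := by
    ext x
    fin_cases x <;>
      simp [ψ, φ, PresentedGroup.toGroup.of, fψ, fφ, H3.Q, H3.R, H3.B, Heis.q, Heis.r, Heis.b]
  intro x
  exact DFunLike.congr_fun this x

lemma ψ_injective : Function.Injective ψ :=
  Function.LeftInverse.injective left_inv

lemma ψ_range : ψ.range = Subgroup.closure {H3.Q, H3.R, H3.B} := by
  rw [MonoidHom.range_eq_map, ← PresentedGroup.closure_range_of HeisRels,
    MonoidHom.map_closure]
  congr 1
  rw [← Set.range_comp]
  have e : (⇑ψ ∘ PresentedGroup.of) = fψ := funext fun i => PresentedGroup.toGroup.of hψ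
  rw [e]
  ext x
  simp only [fψ, Set.mem_range, Set.mem_insert_iff, Set.mem_singleton_iff]
  constructor
  · rintro ⟨i, rfl⟩
    fin_cases i <;> simp
  · rintro (rfl | rfl | rfl)
    · exact ⟨0, rfl⟩
    · exact ⟨1, rfl⟩
    · exact ⟨2, rfl⟩

/-- In `G = ⟨P,Q,R,B | [P,Q]=[Q,R]=[R,P]=B, B central⟩`, the subgroup generated by
`Q`, `R` and `B` is isomorphic to the discrete Heisenberg group
`⟨Q,R,B | [Q,R]=B, [Q,B]=[R,B]=1⟩`. -/
theorem H3_subgroup_QRB_iso_Heisenberg :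
    Nonempty ((Subgroup.closure {H3.Q, H3.R, H3.B} : Subgroup H3) ≃* Heis) := by
  exact ⟨(MulEquiv.subgroupCongr ψ_range.symm).trans (MonoidHom.ofInjective ψ_injective).symm⟩
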